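/- Let q be an odd prime, a ≥ 1, and n ≥ 1 with (q-1) | n. Then the sequence (S_n(m) mod q^a)_{m≥1} is periodic with exact period q^(a+1). -/

import Mathlib

open Finset

lemma sum_modEq (M : ℕ) (f : ℕ → ℕ) (T : ℕ) :
    ∀ u, (∀ j < u, f j ≡ T [MOD M]) → (∑ j ∈ Finset.range u, f j) ≡ u * T [MOD M] := by
  intro u
  induction u with
  | zero => intro _; simp; rfl
  | succ u ih =>
    intro h
    rw [Finset.sum_range_succ, Nat.succ_mul]
    exact (ih fun j hj => h j (by omega)).add (h u (by omega))


-- shift lemma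
lemma shiftSum (n M d : ℕ) (hper : ∀ k, (k + d)^n ≡ k^n [MOD M]) :
    ∀ m, (∑ i ∈ Finset.range d, (m+i)^n) ≡ (∑ i ∈ Finset.range d, i^n) [MOD M] := by
  intro m
  induction m with
  | zero => simp only [Nat.zero_add]; exact Nat.ModEq.refl _
  | succ k ih =>
    have h1 : (∑ i ∈ Finset.range (d+1), (k+i)^n) = (∑ i ∈ Finset.range d, (k+i)^n) + (k+d)^n :=
      Finset.sum_range_succ _ _
    have h2 : (∑ i ∈ Finset.range (d+1), (k+i)^n) = (∑ i ∈ Finset.range d, (k+1+i)^n) + (k+0)^n := by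
      rw [Finset.sum_range_succ']
      congr 1
      · exact Finset.sum_congr rfl (fun i _ => by ring_nf)
    have key : (∑ i ∈ Finset.range d, (k+1+i)^n) + (k+0)^n ≡ (∑ i ∈ Finset.range d, i^n) + (k+0)^n [MOD M] := by
      rw [← h2, h1]
      calc (∑ i ∈ Finset.range d, (k+i)^n) + (k+d)^n
          ≡ (∑ i ∈ Finset.range d, i^n) + k^n [MOD M] := Nat.ModEq.add ih (hper k)
        _ = (∑ i ∈ Finset.range d, i^n) + (k+0)^n := by norm_num
    exact key.add_right_cancel' _


lemma sq_zero_pow {R : Type*} [CommRing R] (x y : R) (hy : y^2 = 0) :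
    ∀ n : ℕ, 1 ≤ n → (x+y)^n = x^n + n * x^(n-1) * y := by
  intro n hn
  induction n with
  | zero => omega
  | succ m ih =>
    rcases Nat.eq_or_lt_of_le hn with h | h
    · simp [← h]
    · have hm : 1 ≤ m := by omega
      have := ih hm
      have hx : x^(m-1) * x = x^m := by
        rw [← pow_succ]; congr 1; omega
      calc (x+y)^(m+1) = (x+y)^m * (x+y) := by rw [pow_succ]
        _ = (x^m + m * x^(m-1) * y) * (x + y) := by rw [this]
        _ = x^(m+1) + m * (x^(m-1)*x) * y + x^m * y + m * x^(m-1) * y^2 := by ring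
        _ = x^(m+1) + ((m+1 : ℕ) : R) * x^(m+1-1) * y := by rw [hy, hx]; simp only [Nat.add_sub_cancel, Nat.cast_add, Nat.cast_one]; ring

lemma blocks {M : Type*} [AddCommMonoid M] (f : ℕ → M) (N : ℕ) :
    ∀ k, (∑ i ∈ Finset.range (k*N), f i) = ∑ j ∈ Finset.range k, ∑ r ∈ Finset.range N, f (j*N + r) := by
  intro k
  induction k with
  | zero => simp
  | succ k ih =>
    rw [Nat.succ_mul, Finset.sum_range_add, ih, Finset.sum_range_succ]

-- key lemma: sum of i^n over range q^b
lemma keyB (q n : ℕ) (hq : q.Prime) (hodd : Odd q) (hn1 : 1 ≤ n) (hdd : q - 1 ∣ n) :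
    ∀ b, 1 ≤ b → (∑ i ∈ Finset.range (q^b), i^n) ≡ (q-1) * q^(b-1) [MOD q^b] := by
  have hq1 : 1 < q := hq.one_lt
  intro b hb
  induction b with
  | zero => omega
  | succ b ih =>
    rcases Nat.eq_or_lt_of_le hb with h | h
    · -- base case b+1 = 1, i.e. b = 0
      have hb0 : b = 0 := by omega
      subst hb0
      simp only [zero_add, pow_one, Nat.sub_self, pow_zero, mul_one]
      rw [← ZMod.natCast_eq_natCast_iff]
      push_cast
      obtain ⟨k, hk⟩ := hdd
      have : ∀ i ∈ Finset.range (q-1), ((i+1 : ℕ) : ZMod q)^n = 1 := by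
        intro i hi
        simp only [Finset.mem_range] at hi
        have hne : ((i+1 : ℕ) : ZMod q) ≠ 0 := by
          rw [Ne, ZMod.natCast_eq_zero_iff]
          intro hdvd
          have := Nat.le_of_dvd (by omega) hdvd
          omega
        haveI : Fact q.Prime := ⟨hq⟩
        rw [hk, pow_mul, ZMod.pow_card_sub_one_eq_one hne, one_pow]
      rw [show Finset.range q = Finset.range ((q-1)+1) from by congr 1; omega,
        Finset.sum_range_succ']
      have hs : (∑ k ∈ Finset.range (q-1), ((k+1:ℕ) : ZMod q)^n) = ((q-1 : ℕ) : ZMod q) := by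
        rw [Finset.sum_congr rfl this, Finset.sum_const, Finset.card_range, nsmul_eq_mul, mul_one]
      rw [hs]
      simp [zero_pow (by omega : n ≠ 0)]
    · have hb1 : 1 ≤ b := by omega
      have IH := ih hb1
      have hNsq : ((q : ZMod (q^(b+1)))^b)^2 = 0 := by
        rw [← pow_mul, ← Nat.cast_pow, ZMod.natCast_eq_zero_iff]
        exact pow_dvd_pow q (by omega)
      obtain ⟨t, ht⟩ : ∃ t, q - 1 = t + t := by
        obtain ⟨s, hs⟩ := hodd
        exact ⟨s, by omega⟩
      have hgauss : (∑ j ∈ Finset.range q, j) = q * t := by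
        have h2 := Finset.sum_range_id_mul_two q
        have h3 : q * (q - 1) = q * (t + t) := by rw [← ht]
        have h4 : (∑ j ∈ Finset.range q, j) * 2 = (q * t) * 2 := by
          rw [h2, h3]; ring
        omega
      have hgauss2 : ((∑ j ∈ Finset.range q, j) * q^b) = q^(b+1) * t := by
        rw [hgauss]; ring
      have step1 : (∑ i ∈ Finset.range (q^(b+1)), i^n) ≡ q * (∑ r ∈ Finset.range (q^b), r^n) [MOD q^(b+1)] := by
        have hdec : (∑ i ∈ Finset.range (q^(b+1)), i^n) = ∑ j ∈ Finset.range q, ∑ r ∈ Finset.range (q^b), (j*q^b + r)^n := by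
          rw [show q^(b+1) = q * q^b from by ring]
          exact blocks (fun i => i^n) (q^b) q
        rw [← ZMod.natCast_eq_natCast_iff, hdec]
        push_cast
        have hterm : ∀ j ∈ Finset.range q, ∀ r ∈ Finset.range (q^b),
            ((j : ZMod (q^(b+1))) * (q : ZMod (q^(b+1)))^b + (r : ZMod (q^(b+1))))^n
              = (r : ZMod (q^(b+1)))^n + (n : ZMod (q^(b+1))) * (r : ZMod (q^(b+1)))^(n-1)
                  * ((j : ZMod (q^(b+1))) * (q : ZMod (q^(b+1)))^b) := by
          intro j _ r _
          have hy : ((j : ZMod (q^(b+1))) * (q : ZMod (q^(b+1)))^b)^2 = 0 := by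
            rw [mul_pow, hNsq, mul_zero]
          have h5 := sq_zero_pow ((r : ℕ) : ZMod (q^(b+1)))
            ((j : ZMod (q^(b+1))) * (q : ZMod (q^(b+1)))^b) hy n hn1
          rw [add_comm ((r : ZMod (q^(b+1))))
            ((j : ZMod (q^(b+1))) * (q : ZMod (q^(b+1)))^b)] at h5
          exact h5
        rw [Finset.sum_congr rfl (fun j hj => Finset.sum_congr rfl (fun r hr => hterm j hj r hr))]
        simp only [Finset.sum_add_distrib]
        have hA : (∑ j ∈ Finset.range q, ∑ r ∈ Finset.range (q^b), (r : ZMod (q^(b+1)))^n)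
            = (q : ZMod (q^(b+1))) * ∑ r ∈ Finset.range (q^b), (r : ZMod (q^(b+1)))^n := by
          rw [Finset.sum_const, Finset.card_range, nsmul_eq_mul]
        have hB : (∑ j ∈ Finset.range q, ∑ r ∈ Finset.range (q^b),
            (n : ZMod (q^(b+1))) * (r : ZMod (q^(b+1)))^(n-1)
              * ((j : ZMod (q^(b+1))) * (q : ZMod (q^(b+1)))^b)) = 0 := by
          have inner : ∀ j : ℕ, (∑ r ∈ Finset.range (q^b),
              (n : ZMod (q^(b+1))) * (r : ZMod (q^(b+1)))^(n-1)
                * ((j : ZMod (q^(b+1))) * (q : ZMod (q^(b+1)))^b))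
              = ((n : ZMod (q^(b+1))) * ∑ r ∈ Finset.range (q^b), (r : ZMod (q^(b+1)))^(n-1))
                * ((j : ZMod (q^(b+1))) * (q : ZMod (q^(b+1)))^b) := by
            intro j
            rw [← Finset.sum_mul, Finset.mul_sum]
          rw [Finset.sum_congr rfl (fun j _ => inner j)]
          have collect : (∑ j ∈ Finset.range q,
              ((n : ZMod (q^(b+1))) * ∑ r ∈ Finset.range (q^b), (r : ZMod (q^(b+1)))^(n-1))
                * ((j : ZMod (q^(b+1))) * (q : ZMod (q^(b+1)))^b))
              = ((n : ZMod (q^(b+1))) * ∑ r ∈ Finset.range (q^b), (r : ZMod (q^(b+1)))^(n-1))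
                * ((∑ j ∈ Finset.range q, (j : ZMod (q^(b+1)))) * (q : ZMod (q^(b+1)))^b) := by
            rw [← Finset.mul_sum]
            congr 1
            rw [← Finset.sum_mul]
          rw [collect]
          have hz : (∑ j ∈ Finset.range q, (j : ZMod (q^(b+1)))) * (q : ZMod (q^(b+1)))^b = 0 := by
            rw [← Nat.cast_sum, ← Nat.cast_pow, ← Nat.cast_mul, hgauss2, Nat.cast_mul,
              ZMod.natCast_self, zero_mul]
          rw [hz, mul_zero]
        rw [hA, hB, add_zero]
      have step2 : q * (∑ r ∈ Finset.range (q^b), r^n) ≡ (q-1) * q^(b+1-1) [MOD q^(b+1)] := by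
        have hml := Nat.ModEq.mul_left' (c := q) IH
        rw [← pow_succ'] at hml
        calc q * (∑ r ∈ Finset.range (q^b), r^n)
            ≡ q * ((q-1) * q^(b-1)) [MOD q^(b+1)] := hml
          _ = (q-1) * q^(b+1-1) := by
              rw [Nat.add_sub_cancel,
                show q * ((q-1) * q^(b-1)) = (q-1) * (q^(b-1) * q) from by ring, ← pow_succ]
              congr 2
              omega
      exact step1.trans step2

def S (n m : ℕ) : ℕ := ∑ i ∈ Finset.Icc 1 m, i ^ n

lemma S_eq (n m : ℕ) (hn : 1 ≤ n) : S n m = ∑ i ∈ Finset.range (m+1), i^n := by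
  unfold S
  rw [Finset.range_eq_Ico, Finset.sum_eq_sum_Ico_succ_bot (Nat.succ_pos m),
    zero_pow (by omega : n ≠ 0), zero_add]
  congr 1

lemma S_add (n m D : ℕ) (hn : 1 ≤ n) :
    S n (m + D) = S n m + ∑ i ∈ Finset.range D, (m+1+i)^n := by
  rw [S_eq _ _ hn, S_eq _ _ hn, show m + D + 1 = (m+1) + D from by ring, Finset.sum_range_add]

theorem stmt13 (q a n : ℕ) (hq : q.Prime) (hodd : Odd q) (ha : 1 ≤ a) (hn : 1 ≤ n)
    (hd : q - 1 ∣ n) :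
    (∀ m, 1 ≤ m → S n (m + q ^ (a + 1)) ≡ S n m [MOD q ^ a]) ∧
    ∀ d, 0 < d → d < q ^ (a + 1) →
      ¬ (∀ m, 1 ≤ m → S n (m + d) ≡ S n m [MOD q ^ a]) := by
  have hq1 : 1 < q := hq.one_lt
  have hqa1 : 1 < q ^ a := Nat.one_lt_pow (by omega) hq1
  constructor
  · intro m _
    have hper : ∀ k, (k + q^(a+1))^n ≡ k^n [MOD q^a] := by
      intro k
      have h0 : (q:ℕ)^(a+1) ≡ 0 [MOD q^a] :=
        (Nat.modEq_zero_iff_dvd).2 (pow_dvd_pow q (by omega))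
      simpa using ((Nat.ModEq.refl k).add h0).pow n
    have hsum := shiftSum n (q^a) (q^(a+1)) hper (m+1)
    have hkey := keyB q n hq hodd hn hd (a+1) (by omega)
    have h0 : (∑ i ∈ Finset.range (q^(a+1)), i^n) ≡ 0 [MOD q^a] := by
      have h1 : (∑ i ∈ Finset.range (q^(a+1)), i^n) ≡ (q-1)*q^(a+1-1) [MOD q^a] :=
        hkey.of_dvd (pow_dvd_pow q (by omega))
      have h2 : (q-1)*q^(a+1-1) ≡ 0 [MOD q^a] := by
        refine (Nat.modEq_zero_iff_dvd).2 ⟨q-1, ?_⟩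
        rw [Nat.add_sub_cancel]; ring
      exact h1.trans h2
    rw [S_add n m (q^(a+1)) hn]
    calc S n m + (∑ i ∈ Finset.range (q^(a+1)), (m+1+i)^n)
        ≡ S n m + 0 [MOD q^a] := (Nat.ModEq.refl _).add (hsum.trans h0)
      _ = S n m := add_zero _
  · rintro d hd0 hdlt H
    -- A : block sums vanish
    have hA : ∀ m, 1 ≤ m → (∑ i ∈ Finset.range d, (m+1+i)^n) ≡ 0 [MOD q^a] := by
      intro m hm
      have h1 := H m hm
      rw [S_add n m d hn] at h1
      have h2 : S n m + (∑ i ∈ Finset.range d, (m+1+i)^n) ≡ S n m + 0 [MOD q^a] := by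
        simpa using h1
      exact h2.add_left_cancel' _
    -- B for m ≥ 2
    have hB2 : ∀ m, (m + 2 + d)^n ≡ (m+2)^n [MOD q^a] := by
      intro m
      have h1 := hA (m+1) (by omega)
      have h2 := hA (m+2) (by omega)
      have e3 : (∑ i ∈ Finset.range d, (m+1+1+(i+1))^n) = ∑ i ∈ Finset.range d, (m+2+1+i)^n :=
        Finset.sum_congr rfl (fun i _ => by ring_nf)
      have hid : (∑ i ∈ Finset.range d, (m+1+1+i)^n) + (m+1+1+d)^n
          = (m+1+1+0)^n + ∑ i ∈ Finset.range d, (m+2+1+i)^n := by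
        have t1 := Finset.sum_range_succ (fun i => (m+1+1+i)^n) d
        have t2 := Finset.sum_range_succ' (fun i => (m+1+1+i)^n) d
        rw [e3] at t2
        linarith [t1, t2]
      have e4 : m+1+1 = m+2 := by ring
      rw [e4] at hid
      calc (m+2+d)^n = 0 + (m+2+d)^n := (zero_add _).symm
        _ ≡ (∑ i ∈ Finset.range d, (m+1+1+i)^n) + (m+2+d)^n [MOD q^a] := by
            rw [e4]; exact h1.symm.add_right _
        _ = (m+2+0)^n + ∑ i ∈ Finset.range d, (m+2+1+i)^n := by rw [← e4, hid]
        _ ≡ (m+2+0)^n + 0 [MOD q^a] := (Nat.ModEq.refl _).add h2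
        _ = (m+2)^n := by norm_num
    -- B for all m
    have hB : ∀ m, (m + d)^n ≡ m^n [MOD q^a] := by
      intro m
      have h1 := hB2 (m + 2*q^a - 2)
      have e : m + 2*q^a - 2 + 2 = m + 2*q^a := by
        have : 1 ≤ q^a := by omega
        omega
      rw [e] at h1
      have hc : m + 2*q^a ≡ m [MOD q^a] := by
        have h2 : (2*q^a : ℕ) ≡ 0 [MOD q^a] := (Nat.modEq_zero_iff_dvd).2 ⟨2, by ring⟩
        simpa using (Nat.ModEq.refl m).add h2
      calc (m+d)^n ≡ (m + 2*q^a + d)^n [MOD q^a] := ((hc.symm.add_right d).pow n)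
        _ ≡ (m + 2*q^a)^n [MOD q^a] := h1
        _ ≡ m^n [MOD q^a] := hc.pow n
    -- iterate B
    have hBk : ∀ k m, (m + k*d)^n ≡ m^n [MOD q^a] := by
      intro k
      induction k with
      | zero => intro m; simp; rfl
      | succ k ih =>
        intro m
        have : m + (k+1)*d = (m + k*d) + d := by ring
        rw [this]
        exact (hB (m + k*d)).trans (ih m)
    -- valuation setup
    set e := d.factorization q with he
    set u := d / q^e with hu
    have hdu : q^e * u = d := Nat.ordProj_mul_ordCompl_eq_self d q
    have hqu : ¬ q ∣ u := Nat.not_dvd_ordCompl hq (by omega)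
    have hea : e ≤ a := by
      by_contra hcon
      have h1 : q^(a+1) ≤ q^e := Nat.pow_le_pow_right (by omega) (by omega)
      have h2 : q^e ≤ d := Nat.le_of_dvd hd0 ⟨u, hdu.symm⟩
      omega
    -- find k with k*d ≡ q^e [MOD q^a]
    obtain ⟨k, hk⟩ : ∃ k, k * d ≡ q^e [MOD q^a] := by
      rcases Nat.eq_or_lt_of_le hea with heq | hlt
      · refine ⟨1, ?_⟩
        have h1 : (q:ℕ)^a ∣ 1 * d := by
          rw [one_mul, ← hdu, heq]
          exact Dvd.intro u rfl
        have h2 : (q:ℕ)^a ∣ q^e := by rw [heq]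
        exact ((Nat.modEq_zero_iff_dvd).2 h1).trans ((Nat.modEq_zero_iff_dvd).2 h2).symm
      · have hco : Nat.Coprime u (q^(a-e)) :=
          (Nat.Coprime.pow_right _ ((Nat.Prime.coprime_iff_not_dvd hq).2 hqu).symm)
        have hlt1 : 1 < q^(a-e) := Nat.one_lt_pow (by omega) hq1
        obtain ⟨k, -, hk⟩ := Nat.exists_mul_mod_eq_one_of_coprime hco hlt1
        refine ⟨k, ?_⟩
        have h1 : u * k ≡ 1 [MOD q^(a-e)] := by
          unfold Nat.ModEq
          rw [hk, Nat.mod_eq_of_lt hlt1]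
        have h2 : q^e * (u * k) ≡ q^e * 1 [MOD q^e * q^(a-e)] := Nat.ModEq.mul_left' (c := q^e) h1
        rw [mul_one, ← pow_add] at h2
        have h3 : e + (a - e) = a := by omega
        rw [h3] at h2
        calc k * d = q^e * (u * k) := by rw [← hdu]; ring
          _ ≡ q^e [MOD q^a] := h2
    -- D : period q^e for m^n
    have hD : ∀ m, (m + q^e)^n ≡ m^n [MOD q^a] := by
      intro m
      calc (m + q^e)^n ≡ (m + k*d)^n [MOD q^a] := ((Nat.ModEq.refl m).add hk.symm).pow n
        _ ≡ m^n [MOD q^a] := hBk k m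
    -- rule out e = 0
    have he1 : 1 ≤ e := by
      by_contra hcon
      have he0 : e = 0 := by omega
      have h1 : (0 + q^e)^n ≡ 0^n [MOD q^a] := hD 0
      rw [he0] at h1
      simp [zero_pow (by omega : n ≠ 0)] at h1
      have := (Nat.modEq_zero_iff_dvd).1 h1
      have := Nat.le_of_dvd (by omega) this
      omega
    -- E : block sum decomposition
    have hT := shiftSum n (q^a) (q^e) (fun m => hD m)
    set T := ∑ i ∈ Finset.range (q^e), i^n with hTdef
    have hE : (∑ i ∈ Finset.range d, (1+1+i)^n) ≡ u * T [MOD q^a] := by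
      have hdec : (∑ i ∈ Finset.range d, (1+1+i)^n)
          = ∑ j ∈ Finset.range u, ∑ r ∈ Finset.range (q^e), (1+1+(j*q^e + r))^n := by
        rw [show d = u * q^e from by rw [← hdu]; ring]
        exact blocks (fun i => (1+1+i)^n) (q^e) u
      rw [hdec]
      refine sum_modEq (q^a) _ T u ?_
      intro j hj
      have e5 : (∑ r ∈ Finset.range (q^e), (1+1+(j*q^e + r))^n)
          = ∑ r ∈ Finset.range (q^e), ((1+1+j*q^e) + r)^n :=
        Finset.sum_congr rfl (fun r _ => by ring_nf)
      rw [e5]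
      exact hT (1+1+j*q^e)
    -- F : q^a divides u * T, hence T
    have hF : (q:ℕ)^a ∣ u * T := by
      have h1 := hA 1 (by omega)
      exact (Nat.modEq_zero_iff_dvd).1 (hE.symm.trans h1)
    have hcoa : Nat.Coprime (q^a) u :=
      Nat.Coprime.pow_left _ ((Nat.Prime.coprime_iff_not_dvd hq).2 hqu)
    have hTdvd : (q:ℕ)^a ∣ T := by
      rw [mul_comm] at hF
      exact hcoa.dvd_of_dvd_mul_right hF
    -- contradiction via keyB
    have hkey := keyB q n hq hodd hn hd e he1
    have hTe : T ≡ 0 [MOD q^e] :=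
      (Nat.modEq_zero_iff_dvd).2 ((pow_dvd_pow q hea).trans hTdvd)
    have hfin : (q:ℕ)^e ∣ (q-1) * q^(e-1) := (Nat.modEq_zero_iff_dvd).1 (hkey.symm.trans hTe)
    have hsplit : (q:ℕ)^e = q^(e-1) * q := by
      rw [← pow_succ]
      congr 1
      omega
    have hfin2 : (q:ℕ)^(e-1) * q ∣ q^(e-1) * (q-1) := by
      rw [← hsplit, mul_comm (q^(e-1)) (q-1)]
      exact hfin
    have hq_dvd : q ∣ q - 1 :=
      (Nat.mul_dvd_mul_iff_left (pow_pos (by omega : 0 < q) (e-1))).1 hfin2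
    have := Nat.le_of_dvd (by omega) hq_dvd
    omega
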